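/- Let q be a prime power, let d ≥ 2 be an integer coprime to q, let n ≥ 1, and let E be a finite field with q^n elements. Let χ be a nontrivial multiplicative character of E (a homomorphism E^× → ℂ^×) with χ^d = 𝟙, let e > 1 be the order of χ, and let j be the multiplicative order of q modulo e. Then j divides n, and there exists a multiplicative character χ₀ of exact order e on the (unique) subfield F of E with q^j elements such that χ = χ₀ ∘ N_{E/F}, where N_{E/F} : E^× → F^× denotes the field norm of the extension E/F. -/

import Mathlib

open Subgroup

/-- Let `q` be a prime power, `d ≥ 2` an integer coprime to `q`, `n ≥ 1`, and `E` a finite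
field with `q^n` elements.  Let `χ` be a nontrivial multiplicative character of `E` with
`χ^d = 𝟙`, let `e > 1` be the order of `χ`, and let `j` be the multiplicative order of `q`
modulo `e`.  Then `j ∣ n`, and there is a multiplicative character `χ₀` of exact order `e`
on the (unique) subfield `F` of `E` with `q^j` elements such that `χ = χ₀ ∘ N_{E/F}`, where
the norm is given by `N_{E/F}(x) = x^((|E|−1)/(|F|−1))`. -/
theorem mulChar_eq_lift_of_norm (q d n : ℕ) (hq : IsPrimePow q)
    (hd : 2 ≤ d) (hcop : Nat.Coprime d q) (hn : 1 ≤ n)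
    (E : Type*) [Field E] [Fintype E] [DecidableEq E] (hE : Fintype.card E = q ^ n)
    (χ : MulChar E ℂ) (hχ : χ ≠ 1) (hχd : χ ^ d = 1)
    (e : ℕ) (he : e = orderOf χ)
    (j : ℕ) (hj : j = orderOf (q : ZMod e)) :
    1 < e ∧ j ∣ n ∧
      ∃ F : Subfield E, Nat.card F = q ^ j ∧
        ∃ χ₀ : MulChar F ℂ, orderOf χ₀ = e ∧
          ∀ x : E, ∃ hx : x ^ ((q ^ n - 1) / (q ^ j - 1)) ∈ F,
            χ x = χ₀ ⟨x ^ ((q ^ n - 1) / (q ^ j - 1)), hx⟩ := by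
  classical
  obtain ⟨p, k, hp, hk, hpk⟩ := hq
  haveI : Fact p.Prime := ⟨hp.nat_prime⟩
  have hq2 : 2 ≤ q := by
    subst hpk
    calc 2 ≤ p := hp.nat_prime.two_le
    _ ≤ p ^ k := Nat.le_self_pow hk.ne' p
  -- basic facts about `e`
  have hfin : IsOfFinOrder χ := isOfFinOrder_iff_pow_eq_one.mpr ⟨d, by omega, hχd⟩
  have he0 : e ≠ 0 := by rw [he]; exact hfin.orderOf_pos.ne'
  have hene1 : e ≠ 1 := fun h => hχ (orderOf_eq_one_iff.mp (by rw [← he, h]))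
  have he1 : 1 < e := by omega
  have hed : e ∣ d := he ▸ orderOf_dvd_of_pow_eq_one hχd
  -- the unit-group character `ψ`
  set ψ : Eˣ →* ℂˣ := MulChar.mulEquivToUnitHom χ with hψdef
  have horderψ : orderOf ψ = e := by
    rw [hψdef, MulEquiv.orderOf_eq, he]
  have hN1 : 1 ≤ q ^ n := Nat.one_le_pow _ _ (by omega)
  have hNE : 2 ≤ q ^ n := by
    calc 2 ≤ q := hq2
    _ = q ^ 1 := (pow_one q).symm
    _ ≤ q ^ n := Nat.pow_le_pow_right (by omega) hn
  set N : ℕ := q ^ n - 1 with hNdef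
  have hcardU : Fintype.card Eˣ = N := by rw [Fintype.card_units, hE]
  have hψN : ψ ^ N = 1 := by
    ext u
    have hu : u ^ N = 1 := by rw [← hcardU]; exact pow_card_eq_one
    simp only [MonoidHom.pow_apply, MonoidHom.one_apply, ← map_pow, hu, map_one]
  have heN : e ∣ N := horderψ ▸ orderOf_dvd_of_pow_eq_one hψN
  -- `j` divides `n`
  have hecop : e.Coprime q := Nat.Coprime.coprime_dvd_left hed hcop
  have hqn1 : (q : ZMod e) ^ n = 1 := by
    have h1 : (1 : ℕ) ≡ q ^ n [MOD e] := (Nat.modEq_iff_dvd' hN1).mpr heN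
    have := (ZMod.natCast_eq_natCast_iff _ _ _).mpr h1.symm
    push_cast at this
    exact this
  have hjn : j ∣ n := hj ▸ orderOf_dvd_of_pow_eq_one hqn1
  have hj0 : 0 < j := by
    rw [hj, orderOf_pos_iff]
    exact isOfFinOrder_iff_pow_eq_one.mpr ⟨n, by omega, hqn1⟩
  have hqj1 : 1 ≤ q ^ j := Nat.one_le_pow _ _ (by omega)
  have hqj2 : 2 ≤ q ^ j := by
    calc 2 ≤ q := hq2
    _ = q ^ 1 := (pow_one q).symm
    _ ≤ q ^ j := Nat.pow_le_pow_right (by omega) hj0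
  set Q : ℕ := q ^ j - 1 with hQdef
  have hQ0 : 0 < Q := by omega
  have heQ : e ∣ Q := by
    have hpow : (q : ZMod e) ^ j = 1 := by rw [hj]; exact pow_orderOf_eq_one _
    have : ((q ^ j : ℕ) : ZMod e) = ((1 : ℕ) : ZMod e) := by push_cast; exact hpow
    have h1 : (1 : ℕ) ≡ q ^ j [MOD e] := ((ZMod.natCast_eq_natCast_iff _ _ _).mp this).symm
    exact (Nat.modEq_iff_dvd' hqj1).mp h1
  have hQN : Q ∣ N := by
    have h := Nat.sub_dvd_pow_sub_pow (q ^ j) 1 (n / j)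
    rwa [one_pow, ← pow_mul, Nat.mul_div_cancel' hjn] at h
  set m : ℕ := N / Q with hmdef
  have hmQ : m * Q = N := Nat.div_mul_cancel hQN
  have hN0 : 0 < N := by omega
  have hm0 : 0 < m := by
    rcases Nat.eq_zero_or_pos m with h | h
    · rw [h, zero_mul] at hmQ; omega
    · exact h
  -- characteristic of `E`
  have hcharE : CharP E p := by
    obtain ⟨n', hp', hcard⟩ := FiniteField.card E (ringChar E)
    have hdvd : ringChar E ∣ p ^ (k * n) := by
      have : ringChar E ∣ (ringChar E) ^ (n' : ℕ) := dvd_pow_self _ n'.ne_zero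
      rw [← hcard, hE, ← hpk, ← pow_mul] at this
      exact this
    have : ringChar E = p := by
      have := hp'.dvd_of_dvd_pow hdvd
      exact ((Nat.prime_dvd_prime_iff_eq hp' hp.nat_prime).mp this)
    rw [← this]; exact ringChar.charP E
  haveI := hcharE
  have hfrob : ∀ x y : E, (x + y) ^ q ^ j = x ^ q ^ j + y ^ q ^ j := by
    intro x y
    rw [← hpk, ← pow_mul]
    exact add_pow_char_pow x y p (k * j)
  -- the subfield `F`
  have hqj0 : q ^ j ≠ 0 := by omega
  set F : Subfield E :=
    { carrier := {x : E | x ^ q ^ j = x}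
      mul_mem' := by
        intro a b ha hb
        simp only [Set.mem_setOf_eq] at *
        rw [mul_pow, ha, hb]
      one_mem' := by simp
      add_mem' := by
        intro a b ha hb
        simp only [Set.mem_setOf_eq] at *
        rw [hfrob, ha, hb]
      zero_mem' := by simp [hqj0]; intro h; omega
      neg_mem' := by
        intro a ha
        simp only [Set.mem_setOf_eq] at *
        have h0 : ((-a) + a) ^ q ^ j = (0 : E) := by simp [hqj0]; intro h; omega
        rw [hfrob] at h0
        rw [ha] at h0
        linear_combination h0
      inv_mem' := by
        intro a ha
        simp only [Set.mem_setOf_eq] at *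
        rw [inv_pow, ha] } with hFdef
  have hmemF : ∀ x : E, x ∈ F ↔ x ^ q ^ j = x := fun x => Iff.rfl
  -- membership of norms
  have hmem : ∀ x : E, x ^ m ∈ F := by
    intro x
    rcases eq_or_ne x 0 with rfl | hx0
    · rw [zero_pow hm0.ne']; exact zero_mem F
    · rw [hmemF, ← pow_mul]
      have hxN : x ^ N = 1 := by
        rw [hNdef, ← hE]; exact FiniteField.pow_card_sub_one_eq_one x hx0
      have : m * q ^ j = N + m := by
        have : q ^ j = Q + 1 := by omega
        rw [this, Nat.mul_add, mul_one, hmQ]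
      rw [this, pow_add, hxN, one_mul]
  -- the norm monoid hom
  set ν : E →* F :=
    { toFun := fun x => ⟨x ^ m, hmem x⟩
      map_one' := by ext; simp
      map_mul' := by intro x y; ext; simp [mul_pow] } with hνdef
  have hνval : ∀ x : E, (ν x : E) = x ^ m := fun x => rfl
  set f : Eˣ →* Fˣ := Units.map ν with hfdef
  have hfval : ∀ u : Eˣ, ((f u : F) : E) = (u : E) ^ m := fun u => rfl
  -- generator of `Eˣ`
  obtain ⟨g, hg⟩ := IsCyclic.exists_generator (α := Eˣ)
  have hgord : orderOf g = N := by
    rw [orderOf_eq_card_of_forall_mem_zpowers hg, Nat.card_eq_fintype_card, hcardU]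
  -- the kernel of `f` is contained in the kernel of `ψ`
  have hψQ : (ψ g) ^ Q = 1 := by
    have h1 : (ψ g) ^ e = 1 := by
      have := pow_orderOf_eq_one ψ
      rw [horderψ] at this
      calc (ψ g) ^ e = (ψ ^ e) g := by simp [MonoidHom.pow_apply]
      _ = 1 := by rw [this]; rfl
    exact orderOf_dvd_iff_pow_eq_one.mp ((orderOf_dvd_of_pow_eq_one h1).trans heQ)
  have hker : ∀ u : Eˣ, u ^ m = 1 → ψ u = 1 := by
    intro u hu
    obtain ⟨t, ht⟩ := mem_zpowers_iff.mp (hg u)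
    have h1 : g ^ (t * (m : ℤ)) = 1 := by
      rw [zpow_mul, ht, zpow_natCast, hu]
    have hdvd : ((N : ℕ) : ℤ) ∣ t * m := by
      rwa [← hgord, orderOf_dvd_iff_zpow_eq_one]
    obtain ⟨s, hs⟩ : ((Q : ℕ) : ℤ) ∣ t := by
      obtain ⟨c, hc⟩ := hdvd
      refine ⟨c, ?_⟩
      have hm0' : (m : ℤ) ≠ 0 := by exact_mod_cast hm0.ne'
      apply mul_right_cancel₀ hm0'
      rw [hc]
      push_cast [← hmQ]
      ring
    rw [← ht, hs, zpow_mul, map_zpow, zpow_natCast, map_pow, hψQ, one_zpow]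
  have hkerf : (MonoidHom.ker f) ≤ MonoidHom.ker ψ := by
    intro u hu
    rw [MonoidHom.mem_ker] at hu ⊢
    apply hker
    have h1 : ((f u : F) : E) = ((1 : F) : E) := by rw [hu]; simp
    rw [hfval] at h1
    have h2 : ((u : E)) ^ m = 1 := by simpa using h1
    ext
    push_cast
    exact h2
  -- surjectivity of `f`
  have hFunit_pow : ∀ w : Fˣ, (((w : F) : E)) ^ Q = 1 := by
    intro w
    have hw : ((w : F) : E) ^ q ^ j = ((w : F) : E) := (w : F).2
    have hw0 : ((w : F) : E) ≠ 0 := by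
      intro h
      have : (w : F) = 0 := by ext; simpa using h
      exact (Units.ne_zero w) this
    have hqq : q ^ j = Q + 1 := by omega
    rw [hqq, pow_succ] at hw
    have := mul_right_cancel₀ hw0 (hw.trans (one_mul _).symm)
    exact this
  have hsurj : Function.Surjective f := by
    intro w
    have hw0 : ((w : F) : E) ≠ 0 := by
      intro h
      have : (w : F) = 0 := by ext; simpa using h
      exact (Units.ne_zero w) this
    set u : Eˣ := Units.mk0 _ hw0 with hudef
    have huQ : u ^ Q = 1 := by
      ext
      push_cast
      exact hFunit_pow w
    obtain ⟨t, ht⟩ := mem_zpowers_iff.mp (hg u)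
    have h1 : g ^ (t * (Q : ℤ)) = 1 := by rw [zpow_mul, ht, zpow_natCast, huQ]
    have hdvd : ((N : ℕ) : ℤ) ∣ t * Q := by
      rwa [← hgord, orderOf_dvd_iff_zpow_eq_one]
    obtain ⟨s, hs⟩ : ((m : ℕ) : ℤ) ∣ t := by
      obtain ⟨c, hc⟩ := hdvd
      refine ⟨c, ?_⟩
      have hQ0' : (Q : ℤ) ≠ 0 := by exact_mod_cast hQ0.ne'
      apply mul_right_cancel₀ hQ0'
      rw [hc]
      push_cast [← hmQ]
      ring
    refine ⟨g ^ s, ?_⟩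
    have hvm : (g ^ s) ^ (m : ℕ) = u := by
      rw [← zpow_natCast ((g : Eˣ) ^ s) m, ← zpow_mul, mul_comm s (m : ℤ), ← hs, ht]
    ext
    rw [hfval]
    have : ((g ^ s : Eˣ) : E) ^ m = ((u : E)) := by
      rw [← Units.val_pow_eq_pow_val, hvm]
    rw [this]
    rfl
  -- construct `ψ₀` on `Fˣ`
  set ψ₀ : Fˣ →* ℂˣ :=
    (QuotientGroup.lift (MonoidHom.ker f) ψ hkerf).comp
      (QuotientGroup.quotientKerEquivOfSurjective f hsurj).symm.toMonoidHom with hψ₀def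
  have hcomp : ∀ u : Eˣ, ψ₀ (f u) = ψ u := by
    intro u
    have h1 : (QuotientGroup.quotientKerEquivOfSurjective f hsurj).symm (f u)
        = QuotientGroup.mk u := by
      apply (QuotientGroup.quotientKerEquivOfSurjective f hsurj).injective
      simp only [MulEquiv.apply_symm_apply]
      rfl
    rw [hψ₀def]
    simp only [MonoidHom.comp_apply, MulEquiv.coe_toMonoidHom, h1]
    rfl
  -- order of `ψ₀`
  have horderψ₀ : orderOf ψ₀ = e := by
    apply Nat.dvd_antisymm
    · apply orderOf_dvd_of_pow_eq_one
      refine MonoidHom.ext fun w => ?_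
      obtain ⟨u, rfl⟩ := hsurj w
      have hψe : ψ ^ e = 1 := by rw [← horderψ]; exact pow_orderOf_eq_one ψ
      show (ψ₀ ^ e) (f u) = 1
      calc (ψ₀ ^ e) (f u) = (ψ₀ (f u)) ^ e := by simp [MonoidHom.pow_apply]
      _ = (ψ u) ^ e := by rw [hcomp]
      _ = (ψ ^ e) u := by simp [MonoidHom.pow_apply]
      _ = 1 := by rw [hψe]; rfl
    · rw [← horderψ]
      apply orderOf_dvd_of_pow_eq_one
      refine MonoidHom.ext fun u => ?_
      show (ψ ^ orderOf ψ₀) u = 1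
      calc (ψ ^ orderOf ψ₀) u = (ψ u) ^ orderOf ψ₀ := by simp [MonoidHom.pow_apply]
      _ = (ψ₀ (f u)) ^ orderOf ψ₀ := by rw [hcomp]
      _ = (ψ₀ ^ orderOf ψ₀) (f u) := by rw [MonoidHom.pow_apply]
      _ = 1 := by rw [pow_orderOf_eq_one ψ₀]; rfl
  -- the character `χ₀`
  set χ₀ : MulChar F ℂ := MulChar.mulEquivToUnitHom.symm ψ₀ with hχ₀def
  have horderχ₀ : orderOf χ₀ = e := by
    rw [hχ₀def, MulEquiv.orderOf_eq, horderψ₀]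
  -- cardinality of `F`
  have hcardF : Nat.card F = q ^ j := by
    have hset : (F : Set E) = insert (0 : E)
        ((fun u : Eˣ => (u : E)) '' (zpowers (g ^ m) : Set Eˣ)) := by
      ext x
      simp only [Set.mem_insert_iff, Set.mem_image, SetLike.mem_coe]
      constructor
      · intro hx
        rcases eq_or_ne x 0 with rfl | hx0
        · left; rfl
        · right
          set u : Eˣ := Units.mk0 x hx0 with hudef
          have huQ : u ^ Q = 1 := by
            ext
            push_cast
            rw [hmemF] at hx
            have hqq : q ^ j = Q + 1 := by omega
            rw [hqq, pow_succ] at hx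
            exact mul_right_cancel₀ hx0 (hx.trans (one_mul _).symm)
          obtain ⟨t, ht⟩ := mem_zpowers_iff.mp (hg u)
          have h1 : g ^ (t * (Q : ℤ)) = 1 := by rw [zpow_mul, ht, zpow_natCast, huQ]
          have hdvd : ((N : ℕ) : ℤ) ∣ t * Q := by
            rwa [← hgord, orderOf_dvd_iff_zpow_eq_one]
          obtain ⟨s, hs⟩ : ((m : ℕ) : ℤ) ∣ t := by
            obtain ⟨c, hc⟩ := hdvd
            refine ⟨c, ?_⟩
            have hQ0' : (Q : ℤ) ≠ 0 := by exact_mod_cast hQ0.ne'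
            apply mul_right_cancel₀ hQ0'
            rw [hc]
            push_cast [← hmQ]
            ring
          refine ⟨u, ?_, rfl⟩
          rw [mem_zpowers_iff]
          exact ⟨s, by rw [← zpow_natCast (g : Eˣ) m, ← zpow_mul, ← hs, ht]⟩
      · intro hx
        rcases hx with rfl | ⟨u, hu, rfl⟩
        · exact zero_mem F
        · rw [mem_zpowers_iff] at hu
          obtain ⟨s, hs⟩ := hu
          have hgN : g ^ (m * Q) = 1 := by rw [hmQ, ← hgord, pow_orderOf_eq_one]
          have huQ : u ^ Q = 1 := by
            calc u ^ Q = ((g ^ m) ^ s) ^ (Q : ℤ) := by rw [hs, zpow_natCast]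
            _ = ((g ^ m) ^ (Q : ℤ)) ^ s := by rw [← zpow_mul, ← zpow_mul, mul_comm]
            _ = (g ^ (m * Q)) ^ s := by rw [zpow_natCast, ← pow_mul]
            _ = 1 := by rw [hgN, one_zpow]
          rw [hmemF]
          have hqq : q ^ j = Q + 1 := by omega
          rw [hqq, pow_succ]
          have : ((u : E)) ^ Q = 1 := by
            rw [← Units.val_pow_eq_pow_val, huQ]; rfl
          rw [this, one_mul]
    have h0 : (0 : E) ∉ ((fun u : Eˣ => (u : E)) '' (zpowers (g ^ m) : Set Eˣ)) := by
      rintro ⟨u, -, hu⟩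
      exact Units.ne_zero u hu
    have hinj : Function.Injective (fun u : Eˣ => (u : E)) := Units.val_injective
    have hcard1 : Nat.card F = ((F : Set E)).ncard := by
      rw [← SetLike.coe_sort_coe, Nat.card_coe_set_eq]
    rw [hcard1, hset, Set.ncard_insert_of_notMem h0 (Set.toFinite _),
      Set.ncard_image_of_injective _ hinj]
    have : ((zpowers (g ^ m) : Subgroup Eˣ) : Set Eˣ).ncard = Q := by
      rw [← Nat.card_coe_set_eq, SetLike.coe_sort_coe, Nat.card_zpowers, orderOf_pow,
        hgord, Nat.gcd_eq_right ⟨Q, hmQ.symm⟩, Nat.div_eq_of_eq_mul_left hm0 (by rw [← hmQ, Nat.mul_comm])]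
    rw [this]
    omega
  -- conclusion
  refine ⟨he1, hjn, F, hcardF, χ₀, horderχ₀, ?_⟩
  intro x
  refine ⟨hmem x, ?_⟩
  rcases eq_or_ne x 0 with rfl | hx0
  · rw [χ.map_nonunit not_isUnit_zero]
    have h0 : (⟨(0 : E) ^ m, hmem 0⟩ : F) = 0 := by
      ext; simp [zero_pow hm0.ne']
    rw [h0]
    exact (χ₀.map_nonunit not_isUnit_zero).symm
  · set u : Eˣ := Units.mk0 x hx0 with hudef
    have h1 : χ x = (ψ u : ℂ) := by
      rw [hψdef]
      exact (MulChar.coe_equivToUnitHom χ u).symm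
    have h2 : (⟨x ^ m, hmem x⟩ : F) = ((f u : Fˣ) : F) := by
      ext
      rw [hfval]
      rfl
    rw [h1, h2]
    have h3 : χ₀ ((f u : Fˣ) : F) = ((ψ₀ (f u)) : ℂ) := by
      rw [hχ₀def]
      exact MulChar.equivToUnitHom_symm_coe ψ₀ (f u)
    rw [h3, hcomp]
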